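/- Let a group G act by isometries on a metric space Y such that the action is AU-acylindrical and some G-orbit in Y is unbounded. Then every commensurated subgroup H ≤ G all of whose orbits in Y are bounded is finite. -/

import Mathlib

open Set Metric

/-- The two-point `ε`-coarse stabilizer `set_ε(x) ∩ set_ε(y)` of an isometric action. -/
def coarseStab2 (G : Type*) {Y : Type*} [Group G] [PseudoMetricSpace Y] [MulAction G Y]
    (ε : ℝ) (x y : Y) : Set G :=
  {g : G | dist (g • x) x ≤ ε ∧ dist (g • y) y ≤ ε}

/-- An action is *AU-acylindrical* if for every `ε > 0` there is `R ≥ 0` such that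
whenever `dist x y ≥ R` the two-point `ε`-coarse stabilizer is finite. -/
def IsAUAcylindricalAction (G Y : Type*) [Group G] [PseudoMetricSpace Y] [MulAction G Y] : Prop :=
  ∀ ε : ℝ, 0 < ε → ∃ R : ℝ, 0 ≤ R ∧ ∀ x y : Y, R ≤ dist x y → (coarseStab2 G ε x y).Finite

/-- `H` is commensurated in `G`: for every `g`, `H ∩ gHg⁻¹` has finite index in both `H`
and `gHg⁻¹`. -/
def IsCommensuratedSubgroup {G : Type*} [Group G] (H : Subgroup G) : Prop :=
  ∀ g : G, (Subgroup.map (MulAut.conj g).toMonoidHom H).relIndex H ≠ 0 ∧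
    H.relIndex (Subgroup.map (MulAut.conj g).toMonoidHom H) ≠ 0

/-- If `G` acts AU-acylindrically by isometries on a metric space with some
unbounded orbit, then every commensurated subgroup all of whose orbits are bounded is finite. -/
theorem commensurated_bounded_orbits_finite
    (G Y : Type*) [Group G] [MetricSpace Y] [MulAction G Y]
    (hiso : ∀ (g : G) (x y : Y), dist (g • x) (g • y) = dist x y)
    (hAU : IsAUAcylindricalAction G Y)
    (hunb : ∃ x : Y, ¬ Bornology.IsBounded (MulAction.orbit G x))
    (H : Subgroup G) (hcomm : IsCommensuratedSubgroup H)
    (hbdd : ∀ x : Y, Bornology.IsBounded ((fun g : G => g • x) '' (H : Set G))) :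
    Finite H := by
  obtain ⟨x0, hx0⟩ := hunb
  obtain ⟨r, hr⟩ := (hbdd x0).subset_closedBall x0
  set ε : ℝ := max r 0 + 1 with hεdef
  have hεpos : 0 < ε := by positivity
  have hH : ∀ h : G, h ∈ H → dist (h • x0) x0 ≤ ε := by
    intro h hh
    have := hr ⟨h, hh, rfl⟩
    simp only [mem_closedBall] at this
    calc dist (h • x0) x0 ≤ r := this
      _ ≤ ε := by simp [hεdef]; linarith [le_max_left r 0]
  obtain ⟨R, hR0, hRfin⟩ := hAU ε hεpos
  -- find g with dist (g • x0) x0 > R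
  have : ∃ g : G, R < dist (g • x0) x0 := by
    by_contra hc
    push_neg at hc
    apply hx0
    apply (isBounded_closedBall (x := x0) (r := R)).subset
    rintro _ ⟨g, rfl⟩
    exact mem_closedBall.2 (by simpa [dist_comm] using hc g)
  obtain ⟨g, hg⟩ := this
  set M := Subgroup.map (MulAut.conj g).toMonoidHom H with hMdef
  have hKsub : ((H ⊓ M : Subgroup G) : Set G) ⊆ coarseStab2 G ε x0 (g • x0) := by
    rintro k ⟨hkH, hkM⟩
    refine ⟨hH k hkH, ?_⟩
    obtain ⟨h, hh, rfl⟩ := hkM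
    have : (MulEquiv.toMonoidHom (MulAut.conj g)) h • g • x0 = g • (h • x0) := by
      simp [MulAut.conj_apply, mul_smul]
    rw [this, hiso]
    exact hH h hh
  have hKfin : Finite (H ⊓ M : Subgroup G) :=
    ((hRfin x0 (g • x0) (by rw [dist_comm]; exact hg.le)).subset hKsub).to_subtype
  -- the subgroup of H corresponding to H ⊓ M
  have hle : (H ⊓ M : Subgroup G) ≤ H := inf_le_left
  have hfinK' : Finite ((H ⊓ M).subgroupOf H) :=
    Finite.of_equiv _ (Subgroup.subgroupOfEquivOfLe hle).symm.toEquiv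
  have hidx : ((H ⊓ M).subgroupOf H).index ≠ 0 := by
    have : (H ⊓ M).subgroupOf H = M.subgroupOf H := Subgroup.inf_subgroupOf_left M H
    rw [this]
    exact (hcomm g).1
  have hquot : Finite (H ⧸ (H ⊓ M).subgroupOf H) :=
    Nat.finite_of_card_ne_zero hidx
  exact Finite.of_equiv _ (Subgroup.groupEquivQuotientProdSubgroup (s := (H ⊓ M).subgroupOf H)).symm
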